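/- For every integer m ≥ 3, every finite simple graph that is gem-free and co-gem-free contains no induced cycle of length 2m+1 and no induced subgraph isomorphic to the complement of a cycle of length 2m+1. -/

import Mathlib

open SimpleGraph

/-- The co-gem: the disjoint union `P₄ + P₁`. -/
def cogem : SimpleGraph (Fin 4 ⊕ Fin 1) :=
  pathGraph 4 ⊕g (⊥ : SimpleGraph (Fin 1))

/-- The gem: the complement of the co-gem. -/
def gem : SimpleGraph (Fin 4 ⊕ Fin 1) := cogemᶜ

/-- `G` is `H`-free: no induced subgraph of `G` is isomorphic to `H`. -/
def HFree {W V : Type*} (H : SimpleGraph W) (G : SimpleGraph V) : Prop :=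
  IsEmpty (H ↪g G)

/-- `G` is `k`-vertex-critical: `χ(G) = k` and `χ(G - v) < k` for every vertex `v`. -/
def VertexCritical {V : Type*} (G : SimpleGraph V) (k : ℕ) : Prop :=
  G.chromaticNumber = k ∧ ∀ v : V, (G.induce {v}ᶜ).chromaticNumber < k

lemma fin_sub_val {n : ℕ} (u v : Fin n) :
    (u - v).val = if v.val ≤ u.val then u.val - v.val else u.val + n - v.val := by
  have hu := u.isLt; have hv := v.isLt
  rw [Fin.sub_def]
  show (n - v.val + u.val) % n = _
  split
  · have h1 : n - v.val + u.val = (u.val - v.val) + n := by omega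
    rw [h1, Nat.add_mod_right, Nat.mod_eq_of_lt (by omega)]
  · rw [Nat.mod_eq_of_lt (by omega)]
    omega

/-- An embedding of complements. -/
def embCompl {α β : Type*} {H : SimpleGraph α} {G : SimpleGraph β} (f : H ↪g G) :
    Hᶜ ↪g Gᶜ where
  toEmbedding := f.toEmbedding
  map_rel_iff' := by
    intro a b
    simp [compl_adj, f.map_adj_iff, f.toEmbedding.injective.ne_iff]

/-- The co-gem embeds into the cycle of length `2m+1` for `m ≥ 3`. -/
def cogemIntoCycle (m : ℕ) (hm : 3 ≤ m) : cogem ↪g cycleGraph (2 * m + 1) where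
  toFun := Sum.elim (fun i => ⟨i.val, by omega⟩) (fun _ => ⟨5, by omega⟩)
  inj' := by
    rintro (a | a) (b | b) h <;>
      simp only [Sum.elim_inl, Sum.elim_inr, Fin.mk.injEq] at h <;>
      first
      | (exact congrArg Sum.inl (Fin.ext h))
      | (exact congrArg Sum.inr (Subsingleton.elim a b))
      | (exfalso; omega)
  map_rel_iff' := by
    rintro (a | a) (b | b) <;>
      dsimp only [DFunLike.coe] <;>
      simp only [Function.Embedding.coeFn_mk, Sum.elim_inl, Sum.elim_inr, cogem,
        SimpleGraph.sum_adj, cycleGraph_adj', pathGraph_adj, fin_sub_val, bot_adj]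
    · have ha := a.isLt; have hb := b.isLt
      split <;> split <;> omega
    · have ha := a.isLt
      constructor
      · split <;> split <;> omega
      · exact False.elim
    · have hb := b.isLt
      constructor
      · split <;> split <;> omega
      · exact False.elim
    · constructor
      · split <;> omega
      · exact False.elim

theorem stmt14 (m : ℕ) (hm : 3 ≤ m) (V : Type*) [Fintype V] (G : SimpleGraph V)
    (hgem : HFree gem G) (hcogem : HFree cogem G) :
    HFree (cycleGraph (2 * m + 1)) G ∧ HFree (cycleGraph (2 * m + 1))ᶜ G := by
  constructor
  · exact ⟨fun e => hcogem.false (e.comp (cogemIntoCycle m hm))⟩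
  · exact ⟨fun e => hgem.false (e.comp (embCompl (cogemIntoCycle m hm)))⟩
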